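/- Let G be a finite abelian group and I a finite set with 0 ∈ I of size 1 + |G| (elements of G together with one extra element X). Consider the based ring with basis G ∪ {X}, multiplication the group law on G, g·X = X·g = X for g ∈ G, and X² = nX + Σ_{g∈G} g for a nonnegative integer n. Then the largest root x of x² = n x + |G| satisfies: x²/|G| is an algebraic integer if and only if (n + √(n²+4|G|))²/(4|G|) is an algebraic integer; and if n = 1 and this holds, then |G| ≤ 2. -/

import Mathlib

open Polynomial

/-- For the Tambara–Yamagami-type based ring `A_n(G)` of a finite abelian group `G`
(with `X² = n·X + ∑_{g∈G} g`), the Frobenius–Perron dimension of `X` is the largest root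
`x = (n + √(n²+4|G|))/2` of `x² = n·x + |G|`; `x²/|G|` is an algebraic integer iff
`(n + √(n²+4|G|))²/(4|G|)` is, and if `n = 1` and this holds then `|G| ≤ 2`. -/
theorem stmt19 (G : Type*) [CommGroup G] [Fintype G] (n : ℕ)
    (x : ℝ)
    (hx : x = ((n : ℝ) + Real.sqrt ((n : ℝ) ^ 2 + 4 * (Fintype.card G : ℝ))) / 2) :
    (IsIntegral ℤ (x ^ 2 / (Fintype.card G : ℝ)) ↔
      IsIntegral ℤ (((n : ℝ) + Real.sqrt ((n : ℝ) ^ 2 + 4 * (Fintype.card G : ℝ))) ^ 2 /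
        (4 * (Fintype.card G : ℝ)))) ∧
    (n = 1 → IsIntegral ℤ (x ^ 2 / (Fintype.card G : ℝ)) → Fintype.card G ≤ 2) := by
  set m : ℕ := Fintype.card G with hmdef
  have hmpos : 0 < m := Fintype.card_pos
  have hm0 : (m : ℝ) ≠ 0 := by positivity
  have h1 : x ^ 2 / (m : ℝ) =
      ((n : ℝ) + Real.sqrt ((n : ℝ) ^ 2 + 4 * (m : ℝ))) ^ 2 / (4 * (m : ℝ)) := by
    rw [hx]; ring
  refine ⟨by rw [h1], ?_⟩
  intro hn hInt
  subst hn
  -- basic facts about x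
  have hs0 : (0:ℝ) ≤ (1 : ℝ) ^ 2 + 4 * (m : ℝ) := by positivity
  have hs : Real.sqrt ((1:ℕ) ^ 2 + 4 * (m : ℝ)) ^ 2 = (1 : ℝ) ^ 2 + 4 * (m : ℝ) := by
    push_cast
    exact Real.sq_sqrt hs0
  have hx2 : x ^ 2 = x + m := by
    rw [hx]
    push_cast at hs ⊢
    linear_combination hs / 4
  have hxpos : 0 < x := by
    rw [hx]
    positivity
  set β : ℝ := x / m with hβdef
  have hβpos : 0 < β := div_pos hxpos (by positivity)
  have hβeq : β = x ^ 2 / m - 1 := by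
    rw [hβdef]
    field_simp
    linarith [hx2]
  have hβ : IsIntegral ℤ β := by
    rw [hβeq]; exact hInt.sub isIntegral_one
  have hmβ : (m : ℝ) * β ^ 2 = β + 1 := by
    rw [hβdef]
    field_simp
    linear_combination hx2
  -- the polynomial m X^2 - X - 1
  set g : ℤ[X] := C (m : ℤ) * X ^ 2 - X - 1 with hgdef
  have hg0 : aeval β g = 0 := by
    rw [hgdef]
    simp only [map_sub, map_mul, map_pow, aeval_C, aeval_X, map_one]
    push_cast
    linarith [hmβ]
  have hgne : g ≠ 0 := by
    intro h
    have : g.coeff 2 = 0 := by rw [h]; simp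
    rw [hgdef] at this
    simp [coeff_C_mul, coeff_X_pow, coeff_X, coeff_one] at this
    exact_mod_cast absurd this (by exact_mod_cast hmpos.ne')
  have hgdeg : g.natDegree = 2 := by
    rw [hgdef]
    compute_degree!
    exact_mod_cast hmpos.ne'
  set p : ℤ[X] := minpoly ℤ β with hpdef
  have hpmonic : p.Monic := minpoly.monic hβ
  have hpdvd : p ∣ g := minpoly.isIntegrallyClosed_dvd hβ hg0
  have hpdeg_le : p.natDegree ≤ 2 := hgdeg ▸ natDegree_le_of_dvd hpdvd hgne
  have hpdeg_pos : 0 < p.natDegree := minpoly.natDegree_pos hβ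
  have haevalp : aeval β p = 0 := minpoly.aeval ℤ β
  interval_cases hd : p.natDegree
  · -- degree 1 : β is an integer
    have hpeq : p = X + C (p.coeff 0) := hpmonic.eq_X_add_C hd
    rw [hpeq] at haevalp
    simp only [map_add, aeval_X, aeval_C, algebraMap_int_eq, eq_intCast, map_intCast] at haevalp
    set b : ℤ := -p.coeff 0 with hbdef
    have hβb : β = (b : ℝ) := by push_cast [hbdef]; linarith
    have hb1 : 1 ≤ b := by
      have : (0:ℝ) < (b:ℝ) := hβb ▸ hβpos
      exact_mod_cast this
    have heq : (m : ℤ) * b ^ 2 = b + 1 := by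
      have := hmβ
      rw [hβb] at this
      exact_mod_cast this
    have hm1 : (1:ℤ) ≤ (m:ℤ) := by exact_mod_cast hmpos
    have : (m : ℤ) ≤ 2 := by nlinarith [sq_nonneg (b - 1), mul_nonneg (by linarith : (0:ℤ) ≤ 2*b+1) (by linarith : (0:ℤ) ≤ b-1)]
    exact_mod_cast this
  · -- degree 2 : g = p * (constant), forcing m = 1
    obtain ⟨q, hq⟩ := hpdvd
    have hpne : p ≠ 0 := hpmonic.ne_zero
    have hqne : q ≠ 0 := by rintro rfl; simp at hq; exact hgne hq
    have hqdeg : q.natDegree = 0 := by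
      have := natDegree_mul hpne hqne
      rw [← hq, hgdeg, hd] at this
      omega
    have hc0 : g.coeff 0 = p.coeff 0 * q.coeff 0 := by rw [hq, mul_coeff_zero]
    have hgc0 : g.coeff 0 = -1 := by
      rw [hgdef]; simp [coeff_C_mul, coeff_X_pow, coeff_X, coeff_one]
    have hlead : g.leadingCoeff = p.leadingCoeff * q.leadingCoeff := by
      rw [hq, leadingCoeff_mul]
    have hglead : g.leadingCoeff = (m : ℤ) := by
      rw [leadingCoeff, hgdeg, hgdef]
      simp [coeff_C_mul, coeff_X_pow, coeff_X, coeff_one]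
    have hqlead : q.leadingCoeff = q.coeff 0 := by
      rw [leadingCoeff, hqdeg]
    have hqc : q.coeff 0 = (m : ℤ) := by
      rw [hglead, hpmonic.leadingCoeff, one_mul, hqlead] at hlead
      omega
    have hdvd1 : (m : ℤ) ∣ 1 := by
      refine ⟨-p.coeff 0, ?_⟩
      rw [← hqc]
      linarith [hc0.symm.trans hgc0]
    have : (m : ℤ) ≤ 1 := Int.le_of_dvd one_pos hdvd1
    have : m ≤ 1 := by exact_mod_cast this
    omega
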